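/- Let A be an n×n real matrix, B_u an n×m real matrix, Y a symmetric positive definite n×n real matrix, W an m×n real matrix, Q a symmetric positive semidefinite n×n real matrix, and R a symmetric positive semidefinite m×m real matrix, and suppose the symmetric matrix A·Y + Y·Aᵀ + B_u·W + Wᵀ·B_uᵀ + Y·Q·Y + Wᵀ·R·W is negative definite. Set K = W·Y⁻¹ and A_cl = A + B_u·K. Then for every initial state x₀ ∈ ℝⁿ, the quadratic cost of the closed-loop trajectory x(t) = exp(t·A_cl)·x₀ satisfies ∫₀^∞ x₀ᵀ · exp(t·A_clᵀ) · (Q + Kᵀ·R·K) · exp(t·A_cl) · x₀ dt ≤ x₀ᵀ · Y⁻¹ · x₀. -/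

import Mathlib

open Matrix MeasureTheory
open scoped Matrix

/-- A symmetric real matrix is negative definite if `xᵀ M x < 0` for all nonzero `x`. -/
def Matrix.NegDef {m : Type*} [Fintype m] (M : Matrix m m ℝ) : Prop :=
  M.IsSymm ∧ ∀ x : m → ℝ, x ≠ 0 → x ⬝ᵥ (M *ᵥ x) < 0

section lyap
open NormedSpace Set intervalIntegral
attribute [local instance] Matrix.linftyOpSemiNormedRing Matrix.linftyOpNormedRing Matrix.linftyOpNormedAlgebra

noncomputable def lqrQf {n : ℕ} (x : Fin n → ℝ) : Matrix (Fin n) (Fin n) ℝ →L[ℝ] ℝ :=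
  LinearMap.toContinuousLinearMap
  { toFun := fun M => x ⬝ᵥ (M *ᵥ x)
    map_add' := fun M N => by simp [Matrix.add_mulVec, dotProduct_add]
    map_smul' := fun c M => by simp [Matrix.smul_mulVec] }

@[simp] theorem lqrQf_apply {n : ℕ} (x : Fin n → ℝ) (M : Matrix (Fin n) (Fin n) ℝ) :
    lqrQf x M = x ⬝ᵥ (M *ᵥ x) := rfl

theorem lqr_cost_bound_of_lyap {n : ℕ} (Acl P S : Matrix (Fin n) (Fin n) ℝ)
    (hP : P.PosSemidef) (hS : S.PosSemidef)
    (hN : ∀ x : Fin n → ℝ, x ⬝ᵥ ((Aclᵀ * P + P * Acl + S) *ᵥ x) ≤ 0)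
    (x₀ : Fin n → ℝ) :
    IntegrableOn (fun t : ℝ => x₀ ⬝ᵥ ((exp (t • Aclᵀ) * S * exp (t • Acl)) *ᵥ x₀)) (Set.Ioi 0) ∧
    (∫ t in Set.Ioi (0:ℝ), x₀ ⬝ᵥ ((exp (t • Aclᵀ) * S * exp (t • Acl)) *ᵥ x₀))
      ≤ x₀ ⬝ᵥ (P *ᵥ x₀) := by
  set E : ℝ → Matrix (Fin n) (Fin n) ℝ := fun t => exp (t • Acl) with hEdef
  set G : ℝ → Matrix (Fin n) (Fin n) ℝ := fun t => exp (t • Aclᵀ) with hGdef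
  -- G t is the transpose of E t
  have hGE : ∀ t, G t = (E t)ᵀ := by
    intro t
    simp only [hGdef, hEdef, ← Matrix.transpose_smul]
    exact Matrix.exp_transpose _
  -- rewriting quadratic forms
  have hrw : ∀ (M : Matrix (Fin n) (Fin n) ℝ) (t : ℝ),
      x₀ ⬝ᵥ ((G t * M * E t) *ᵥ x₀) = (E t *ᵥ x₀) ⬝ᵥ (M *ᵥ (E t *ᵥ x₀)) := by
    intro M t
    rw [hGE, Matrix.mul_assoc, ← Matrix.mulVec_mulVec, Matrix.dotProduct_mulVec,
      Matrix.vecMul_transpose, Matrix.mulVec_mulVec]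
  -- continuity facts
  have hEc : Continuous E := exp_continuous.comp (continuous_id.smul continuous_const)
  have hGc : Continuous G := exp_continuous.comp (continuous_id.smul continuous_const)
  have hcont : ∀ M : Matrix (Fin n) (Fin n) ℝ,
      Continuous (fun t => x₀ ⬝ᵥ ((G t * M * E t) *ᵥ x₀)) := by
    intro M
    exact (lqrQf x₀).continuous.comp ((hGc.mul continuous_const).mul hEc)
  set g : ℝ → ℝ := fun t => x₀ ⬝ᵥ ((G t * S * E t) *ᵥ x₀) with hgdef
  set f : ℝ → ℝ := fun t => x₀ ⬝ᵥ ((G t * P * E t) *ᵥ x₀) with hfdef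
  set f' : ℝ → ℝ := fun t => x₀ ⬝ᵥ ((G t * (Aclᵀ * P + P * Acl) * E t) *ᵥ x₀) with hf'def
  -- derivative of f
  have hderiv : ∀ t : ℝ, HasDerivAt f (f' t) t := by
    intro t
    have hG : HasDerivAt G (G t * Aclᵀ) t := hasDerivAt_exp_smul_const Aclᵀ t
    have hE : HasDerivAt E (Acl * E t) t := hasDerivAt_exp_smul_const' Acl t
    have hH : HasDerivAt (fun u => G u * P * E u)
        (G t * Aclᵀ * P * E t + G t * P * (Acl * E t)) t := (hG.mul_const P).mul hE
    have : HasDerivAt f (lqrQf x₀ (G t * Aclᵀ * P * E t + G t * P * (Acl * E t))) t :=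
      ((lqrQf x₀).hasFDerivAt).comp_hasDerivAt t hH
    convert this using 1
    have : G t * Aclᵀ * P * E t + G t * P * (Acl * E t)
        = G t * (Aclᵀ * P + P * Acl) * E t := by noncomm_ring
    simp [hf'def, ← this]
  -- pointwise inequalities
  have hg0 : ∀ t, 0 ≤ g t := by
    intro t
    have h := hS.dotProduct_mulVec_nonneg (E t *ᵥ x₀)
    rw [star_trivial] at h
    show (0:ℝ) ≤ x₀ ⬝ᵥ ((G t * S * E t) *ᵥ x₀)
    rw [hrw]; exact h
  have hgf' : ∀ t, g t + f' t ≤ 0 := by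
    intro t
    have heq : g t + f' t = (E t *ᵥ x₀) ⬝ᵥ ((Aclᵀ * P + P * Acl + S) *ᵥ (E t *ᵥ x₀)) := by
      show x₀ ⬝ᵥ ((G t * S * E t) *ᵥ x₀) + x₀ ⬝ᵥ ((G t * (Aclᵀ * P + P * Acl) * E t) *ᵥ x₀) = _
      rw [hrw, hrw, ← dotProduct_add, ← Matrix.add_mulVec, add_comm S]
    rw [heq]
    exact hN _
  have hf0 : ∀ t, 0 ≤ f t := by
    intro t
    have h := hP.dotProduct_mulVec_nonneg (E t *ᵥ x₀)
    rw [star_trivial] at h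
    show (0:ℝ) ≤ x₀ ⬝ᵥ ((G t * P * E t) *ᵥ x₀)
    rw [hrw]; exact h
  have hfzero : f 0 = x₀ ⬝ᵥ (P *ᵥ x₀) := by
    simp [hfdef, hGdef, hEdef, exp_zero]
  -- FTC
  have hbound : ∀ T : ℝ, 0 ≤ T → (∫ u in (0:ℝ)..T, g u) ≤ x₀ ⬝ᵥ (P *ᵥ x₀) := by
    intro T hT
    have hFTC : (∫ u in (0:ℝ)..T, f' u) = f T - f 0 :=
      intervalIntegral.integral_eq_sub_of_hasDerivAt (fun u _ => hderiv u)
        ((hcont _).intervalIntegrable _ _)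
    have hmono : (∫ u in (0:ℝ)..T, g u) ≤ ∫ u in (0:ℝ)..T, -f' u := by
      apply intervalIntegral.integral_mono_on hT ((hcont _).intervalIntegrable _ _)
        (((hcont _).neg).intervalIntegrable _ _)
      intro x _
      simp only [Pi.neg_apply]
      linarith [hgf' x]
    rw [intervalIntegral.integral_neg, hFTC] at hmono
    linarith [hf0 T, hfzero]
  -- integrability
  have hInt : IntegrableOn g (Set.Ioi (0:ℝ)) := by
    apply integrableOn_Ioi_of_intervalIntegral_norm_bounded (x₀ ⬝ᵥ (P *ᵥ x₀)) 0
      (fun i : ℝ => ((hcont S).integrableOn_Ioc)) Filter.tendsto_id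
    filter_upwards [Filter.eventually_ge_atTop (0:ℝ)] with i hi
    have heq : (∫ u in (0:ℝ)..i, ‖g u‖) = ∫ u in (0:ℝ)..i, g u := by
      apply intervalIntegral.integral_congr
      intro x _
      exact Real.norm_of_nonneg (hg0 x)
    show (∫ u in (0:ℝ)..i, ‖g u‖) ≤ x₀ ⬝ᵥ (P *ᵥ x₀)
    rw [heq]
    exact hbound i hi
  refine ⟨hInt, ?_⟩
  have ht := intervalIntegral_tendsto_integral_Ioi 0 hInt Filter.tendsto_id
  apply le_of_tendsto ht
  filter_upwards [Filter.eventually_ge_atTop (0:ℝ)] with i hi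
  exact hbound i hi

end lyap

/-- Feasibility of the LQR LMI bounds the closed-loop quadratic cost by `x₀ᵀ Y⁻¹ x₀`. -/
theorem lqr_lmi_cost_bound {n m : ℕ}
    (A : Matrix (Fin n) (Fin n) ℝ) (Bu : Matrix (Fin n) (Fin m) ℝ)
    (Y : Matrix (Fin n) (Fin n) ℝ) (W : Matrix (Fin m) (Fin n) ℝ)
    (Q : Matrix (Fin n) (Fin n) ℝ) (R : Matrix (Fin m) (Fin m) ℝ)
    (hY : Y.PosDef) (hQ : Q.PosSemidef) (hR : R.PosSemidef)
    (hLMI : (A * Y + Y * Aᵀ + Bu * W + Wᵀ * Buᵀ + Y * Q * Y + Wᵀ * R * W).NegDef)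
    (K : Matrix (Fin m) (Fin n) ℝ) (hK : K = W * Y⁻¹)
    (Acl : Matrix (Fin n) (Fin n) ℝ) (hAcl : Acl = A + Bu * K)
    (x₀ : Fin n → ℝ) :
    IntegrableOn
      (fun t : ℝ =>
        x₀ ⬝ᵥ ((NormedSpace.exp (t • Aclᵀ) * (Q + Kᵀ * R * K) * NormedSpace.exp (t • Acl)) *ᵥ x₀))
      (Set.Ioi 0) ∧
    (∫ t in Set.Ioi (0 : ℝ),
        x₀ ⬝ᵥ ((NormedSpace.exp (t • Aclᵀ) * (Q + Kᵀ * R * K) * NormedSpace.exp (t • Acl)) *ᵥ x₀))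
      ≤ x₀ ⬝ᵥ (Y⁻¹ *ᵥ x₀) := by
  have hYdet : IsUnit Y.det := isUnit_iff_ne_zero.mpr (ne_of_gt hY.det_pos)
  have hYP : Y * Y⁻¹ = 1 := Matrix.mul_nonsing_inv Y hYdet
  have hPY : Y⁻¹ * Y = 1 := Matrix.nonsing_inv_mul Y hYdet
  have hYsymm : Yᵀ = Y := by
    ext i j
    rw [Matrix.transpose_apply]
    nth_rewrite 2 [← hY.1]
    rw [Matrix.conjTranspose_apply, star_trivial]
  have hPsymm : (Y⁻¹)ᵀ = Y⁻¹ := by rw [Matrix.transpose_nonsing_inv, hYsymm]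
  have hP : (Y⁻¹).PosSemidef := hY.inv.posSemidef
  have hKt : Kᴴ = Kᵀ := by
    ext i j; rw [Matrix.conjTranspose_apply, Matrix.transpose_apply, star_trivial]
  have hS : (Q + Kᵀ * R * K).PosSemidef := by
    have := hR.conjTranspose_mul_mul_same K
    rw [hKt] at this
    exact hQ.add this
  have hW : W = K * Y := by rw [hK, Matrix.mul_assoc, hPY, Matrix.mul_one]
  have hPYmul : ∀ Z : Matrix (Fin n) (Fin n) ℝ, Y⁻¹ * (Y * Z) = Z := fun Z => by
    rw [← Matrix.mul_assoc, hPY, Matrix.one_mul]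
  have key : Aclᵀ * Y⁻¹ + Y⁻¹ * Acl + (Q + Kᵀ * R * K)
      = Y⁻¹ * (A * Y + Y * Aᵀ + Bu * W + Wᵀ * Buᵀ + Y * Q * Y + Wᵀ * R * W) * Y⁻¹ := by
    subst hAcl hW
    simp only [Matrix.transpose_add, Matrix.transpose_mul, hYsymm, Matrix.mul_add,
      Matrix.add_mul, Matrix.mul_assoc, hYP, Matrix.mul_one, hPYmul]
    abel
  have hNle : ∀ x : Fin n → ℝ,
      x ⬝ᵥ ((Aclᵀ * Y⁻¹ + Y⁻¹ * Acl + (Q + Kᵀ * R * K)) *ᵥ x) ≤ 0 := by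
    intro x
    rw [key]
    have hq : x ⬝ᵥ ((Y⁻¹ * (A * Y + Y * Aᵀ + Bu * W + Wᵀ * Buᵀ + Y * Q * Y + Wᵀ * R * W) * Y⁻¹) *ᵥ x)
        = (Y⁻¹ *ᵥ x) ⬝ᵥ ((A * Y + Y * Aᵀ + Bu * W + Wᵀ * Buᵀ + Y * Q * Y + Wᵀ * R * W) *ᵥ (Y⁻¹ *ᵥ x)) := by
      rw [Matrix.mul_assoc, ← Matrix.mulVec_mulVec, Matrix.dotProduct_mulVec]
      nth_rewrite 1 [← hPsymm]
      rw [Matrix.vecMul_transpose, Matrix.mulVec_mulVec]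
    rw [hq]
    by_cases hx : Y⁻¹ *ᵥ x = 0
    · rw [hx]; simp
    · exact le_of_lt (hLMI.2 _ hx)
  exact lqr_cost_bound_of_lyap Acl Y⁻¹ (Q + Kᵀ * R * K) hP hS hNle x₀
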